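/- For a stable real polynomial p of degree n (all roots with negative real part, positive leading coefficient), write p(z) = 2q(z²) + 2z·r(z²) with q, r real polynomials (the even and odd parts). Then all roots of the polynomial f(s) = p(s) − p(−s) = 4s·r(s²), apart from s = 0, are purely imaginary; equivalently all roots of r are real and negative. -/

import Mathlib

open Polynomial Complex

private lemma factor_lt {z ρ : ℂ} (hz : 0 < z.re) (hρ : ρ.re < 0) :
    ‖(-(starRingEnd ℂ z) - ρ)‖ < ‖(z - ρ)‖ := by
  rw [Complex.norm_def, Complex.norm_def]
  apply Real.sqrt_lt_sqrt (Complex.normSq_nonneg _)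
  simp only [Complex.normSq_apply, Complex.sub_re, Complex.sub_im, Complex.neg_re,
    Complex.neg_im, Complex.conj_re, Complex.conj_im]
  nlinarith [mul_pos hz (neg_pos.2 hρ)]

private lemma hb_abs_lt (p : Polynomial ℝ)
    (hdeg : 1 ≤ p.natDegree)
    (hstable : ∀ ρ : ℂ, (Polynomial.aeval ρ) p = 0 → ρ.re < 0)
    {z : ℂ} (hz : 0 < z.re) :
    ‖((Polynomial.aeval (-z)) p)‖ < ‖((Polynomial.aeval z) p)‖ := by
  set P : Polynomial ℂ := p.map (algebraMap ℝ ℂ) with hP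
  have hp0 : p ≠ 0 := fun h => by simp [h] at hdeg
  have hP0 : P ≠ 0 := by
    simpa [hP, Polynomial.map_eq_zero_iff (algebraMap ℝ ℂ).injective] using hp0
  have haev : ∀ w : ℂ, (Polynomial.aeval w) p = P.eval w := fun w => by
    rw [hP, Polynomial.eval_map]; rfl
  have hfac := (IsAlgClosed.splits P).eq_prod_roots
  have hroots : ∀ ρ ∈ P.roots, ρ.re < 0 := by
    intro ρ hρ
    exact hstable ρ (by rw [haev]; exact (Polynomial.mem_roots hP0).1 hρ)
  have hcard : P.roots ≠ 0 := by
    intro h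
    have := (Polynomial.splits_iff_card_roots.1 (IsAlgClosed.splits P))
    rw [h] at this
    simp only [Multiset.card_zero] at this
    rw [hP, Polynomial.natDegree_map_eq_of_injective (algebraMap ℝ ℂ).injective] at this
    omega
  have heval : ∀ w : ℂ, P.eval w = P.leadingCoeff * (P.roots.map (fun ρ => w - ρ)).prod := by
    intro w
    conv_lhs => rw [hfac]
    simp [Polynomial.eval_multiset_prod, Multiset.map_map, Function.comp]
  have hlne : ‖P.leadingCoeff‖ ≠ 0 := by
    simp [norm_ne_zero_iff, Polynomial.leadingCoeff_ne_zero.2 hP0]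
  -- conjugation trick
  have hconj : ‖((Polynomial.aeval (-z)) p)‖
      = ‖(P.eval (-(starRingEnd ℂ z)))‖ := by
    have h1 : (-(starRingEnd ℂ z)) = (starRingEnd ℂ) (-z) := by simp
    rw [h1, ← haev, Polynomial.aeval_conj, Complex.norm_conj]
  have hmp : ∀ s : Multiset ℂ, ‖s.prod‖ = (s.map (fun x => ‖x‖)).prod :=
    fun s => map_multiset_prod (normHom (α := ℂ)) s
  rw [hconj, haev, heval z, heval (-(starRingEnd ℂ z)), norm_mul, norm_mul,
    hmp, hmp,
    Multiset.map_map, Multiset.map_map]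
  apply mul_lt_mul_of_pos_left _ (lt_of_le_of_ne (norm_nonneg _) (Ne.symm hlne))
  -- strict product inequality
  by_cases hpos : ∀ ρ ∈ P.roots, 0 < ‖(-(starRingEnd ℂ z) - ρ)‖
  · exact Multiset.prod_map_lt_prod_map hcard _ _ hpos
      (fun ρ hρ => factor_lt hz (hroots ρ hρ))
  · push_neg at hpos
    obtain ⟨ρ₀, hρ₀, habs⟩ := hpos
    have h0 : ‖(-(starRingEnd ℂ z) - ρ₀)‖ = 0 :=
      le_antisymm habs (norm_nonneg _)
    have hzero : (P.roots.map (fun ρ => ‖(-(starRingEnd ℂ z) - ρ)‖)).prod = 0 := by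
      apply Multiset.prod_eq_zero
      rw [← h0]
      exact Multiset.mem_map_of_mem _ hρ₀
    rw [Function.comp_def, Function.comp_def, hzero]
    apply Multiset.prod_pos
    intro x hx
    obtain ⟨ρ, hρ, rfl⟩ := Multiset.mem_map.1 hx
    have := factor_lt hz (hroots ρ hρ)
    exact lt_of_le_of_lt (norm_nonneg _) this

open Polynomial Complex

private lemma deriv_zero_pos :
    ∀ (s : Multiset ℂ), (∀ ρ ∈ s, ρ.re < 0) →
      Polynomial.eval 0 ((s.map (fun a => Polynomial.X - Polynomial.C a)).prod) ≠ 0 ∧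
      (s ≠ 0 → 0 < (Polynomial.eval 0 (Polynomial.derivative ((s.map (fun a => Polynomial.X - Polynomial.C a)).prod))
        * (starRingEnd ℂ) (Polynomial.eval 0 ((s.map (fun a => Polynomial.X - Polynomial.C a)).prod))).re) := by
  intro s
  induction s using Multiset.induction_on with
  | empty => intro _; simp
  | cons a t ih =>
    intro hmem
    have ha : a.re < 0 := hmem a (Multiset.mem_cons_self a t)
    have ha0 : a ≠ 0 := fun h => by simp [h] at ha
    obtain ⟨hA, hB⟩ := ih (fun ρ hρ => hmem ρ (Multiset.mem_cons_of_mem hρ))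
    set Q := ((t.map (fun a => Polynomial.X - Polynomial.C a)).prod) with hQ
    set A := Polynomial.eval 0 Q with hAdef
    set B := Polynomial.eval 0 (Polynomial.derivative Q) with hBdef
    have hprod : ((a ::ₘ t).map (fun a => Polynomial.X - Polynomial.C a)).prod
        = (Polynomial.X - Polynomial.C a) * Q := by
      rw [Multiset.map_cons, Multiset.prod_cons]
    have hder : Polynomial.eval 0 (Polynomial.derivative (((a ::ₘ t).map (fun a => Polynomial.X - Polynomial.C a)).prod))
        = A - a * B := by
      rw [hprod, Polynomial.derivative_mul]
      simp only [Polynomial.eval_add, Polynomial.eval_mul, Polynomial.eval_sub, Polynomial.eval_X, Polynomial.eval_C, Polynomial.derivative_sub, Polynomial.derivative_X, Polynomial.derivative_C, Polynomial.eval_one, Polynomial.eval_zero, ← hAdef, ← hBdef]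
      ring
    have hev : Polynomial.eval 0 (((a ::ₘ t).map (fun a => Polynomial.X - Polynomial.C a)).prod) = -a * A := by
      rw [hprod]; simp [← hAdef]
    constructor
    · rw [hev]; exact mul_ne_zero (neg_ne_zero.2 ha0) hA
    · intro _
      rw [hder, hev]
      have hkey : ((A - a * B) * (starRingEnd ℂ) (-a * A))
          = -((starRingEnd ℂ) a) * ((Complex.normSq A : ℂ))
            + ((Complex.normSq a : ℂ)) * (B * (starRingEnd ℂ) A) := by
        rw [map_mul, map_neg, ← Complex.mul_conj, ← Complex.mul_conj]
        ring
      rw [hkey]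
      have hnA : 0 < Complex.normSq A := Complex.normSq_pos.2 hA
      have h2 : 0 ≤ (B * (starRingEnd ℂ) A).re := by
        by_cases ht : t = 0
        · subst ht
          simp [hBdef, hQ]
        · exact le_of_lt (hB ht)
      have hnSa : 0 ≤ Complex.normSq a := Complex.normSq_nonneg a
      simp only [Complex.add_re, Complex.mul_re, Complex.neg_re, Complex.neg_im,
        Complex.conj_re, Complex.conj_im, Complex.ofReal_re, Complex.ofReal_im] at h2 ⊢
      nlinarith [hnA, h2, mul_nonneg hnSa h2]

theorem stmt_19 (p q r : Polynomial ℝ)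
    (hdeg : 1 ≤ p.natDegree) (hlead : 0 < p.leadingCoeff)
    (hstable : ∀ ρ : ℂ, (Polynomial.aeval ρ) p = 0 → ρ.re < 0)
    (hq : ∀ z : ℂ, (Polynomial.aeval z) p + (Polynomial.aeval (-z)) p =
      2 * (Polynomial.aeval (z ^ 2)) q)
    (hr : ∀ z : ℂ, (Polynomial.aeval z) p - (Polynomial.aeval (-z)) p =
      2 * z * (Polynomial.aeval (z ^ 2)) r) :
    (∀ z : ℂ, z ≠ 0 → (Polynomial.aeval z) p - (Polynomial.aeval (-z)) p = 0 → z.re = 0) ∧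
    (∀ z : ℂ, (Polynomial.aeval z) r = 0 → ∃ x : ℝ, x < 0 ∧ z = (x : ℂ)) := by
  have part1 : ∀ z : ℂ, z ≠ 0 →
      (Polynomial.aeval z) p - (Polynomial.aeval (-z)) p = 0 → z.re = 0 := by
    intro z _ hzeq
    have heq : (Polynomial.aeval z) p = (Polynomial.aeval (-z)) p := by
      linear_combination hzeq
    rcases lt_trichotomy z.re 0 with h | h | h
    · have := hb_abs_lt p hdeg hstable (z := -z) (by simpa using neg_pos.2 h)
      rw [neg_neg, heq] at this
      exact absurd this (lt_irrefl _)
    · exact h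
    · have := hb_abs_lt p hdeg hstable (z := z) h
      rw [heq] at this
      exact absurd this (lt_irrefl _)
  refine ⟨part1, ?_⟩
  intro w hw
  by_cases hw0 : w = 0
  · -- show r(0) ≠ 0, contradiction
    exfalso
    subst hw0
    set P : Polynomial ℂ := p.map (algebraMap ℝ ℂ) with hP
    have hp0 : p ≠ 0 := fun h => by simp [h] at hdeg
    have hP0 : P ≠ 0 := by
      simpa [hP, Polynomial.map_eq_zero_iff (algebraMap ℝ ℂ).injective] using hp0
    have haev : ∀ u : ℂ, (Polynomial.aeval u) p = P.eval u := fun u => by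
      rw [hP, Polynomial.eval_map]; rfl
    have hfac := (IsAlgClosed.splits P).eq_prod_roots
    have hroots : ∀ ρ ∈ P.roots, ρ.re < 0 := by
      intro ρ hρ
      exact hstable ρ (by rw [haev]; exact (Polynomial.mem_roots hP0).1 hρ)
    have hcard : P.roots ≠ 0 := by
      intro h
      have := (Polynomial.splits_iff_card_roots.1 (IsAlgClosed.splits P))
      rw [h] at this
      simp only [Multiset.card_zero] at this
      rw [hP, Polynomial.natDegree_map_eq_of_injective (algebraMap ℝ ℂ).injective] at this
      omega
    obtain ⟨hA, hBpos⟩ := deriv_zero_pos P.roots hroots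
    have hBpos := hBpos hcard
    have hBne : Polynomial.eval 0 (Polynomial.derivative
        ((P.roots.map (fun a => Polynomial.X - Polynomial.C a)).prod)) ≠ 0 := by
      intro h
      rw [h] at hBpos
      simp at hBpos
    -- polynomial identity
    set rC : Polynomial ℂ := r.map (algebraMap ℝ ℂ) with hrC
    have hraev : ∀ u : ℂ, (Polynomial.aeval u) r = rC.eval u := fun u => by
      rw [hrC, Polynomial.eval_map]; rfl
    have hfun : ∀ u : ℂ, Polynomial.eval u (P - P.comp (-Polynomial.X))
        = Polynomial.eval u (Polynomial.C 2 * (Polynomial.X * (rC.comp (Polynomial.X ^ 2)))) := by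
      intro u
      simp only [Polynomial.eval_sub, Polynomial.eval_comp, Polynomial.eval_neg,
        Polynomial.eval_X, Polynomial.eval_mul, Polynomial.eval_C, Polynomial.eval_pow]
      rw [← haev, ← haev, ← hraev, hr u]
      ring
    have hid := Polynomial.funext hfun
    have hdval := congrArg (fun s => Polynomial.eval 0 (Polynomial.derivative s)) hid
    simp only [Polynomial.derivative_sub, Polynomial.derivative_mul, Polynomial.derivative_C,
      Polynomial.derivative_comp, Polynomial.derivative_neg, Polynomial.derivative_X,
      Polynomial.eval_sub, Polynomial.eval_add, Polynomial.eval_mul, Polynomial.eval_neg,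
      Polynomial.eval_comp, Polynomial.eval_X, Polynomial.eval_C, Polynomial.eval_pow,
      Polynomial.eval_one, Polynomial.eval_zero] at hdval
    -- hdval should reduce to: eval 0 P' + eval 0 P' = 2 * (rC.eval 0)
    have hr0 : rC.eval 0 = 0 := by rw [← hraev]; exact hw
    -- derivative of P via factorization
    have hder : Polynomial.eval 0 (Polynomial.derivative P)
        = P.leadingCoeff * Polynomial.eval 0 (Polynomial.derivative
            ((P.roots.map (fun a => Polynomial.X - Polynomial.C a)).prod)) := by
      conv_lhs => rw [hfac]
      rw [Polynomial.derivative_mul]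
      simp
    have hlne : P.leadingCoeff ≠ 0 := Polynomial.leadingCoeff_ne_zero.2 hP0
    norm_num [hr0] at hdval
    rw [hder] at hdval
    exact hBne ((mul_eq_zero.1 hdval).resolve_left hlne)
  · obtain ⟨z, hz2⟩ := IsAlgClosed.exists_pow_nat_eq w (n := 2) (by norm_num)
    have hz0 : z ≠ 0 := by rintro rfl; simp at hz2; exact hw0 hz2.symm
    have hzr : (Polynomial.aeval z) p - (Polynomial.aeval (-z)) p = 0 := by
      rw [hr z, hz2, hw]; ring
    have hre : z.re = 0 := part1 z hz0 hzr
    have him : z.im ≠ 0 := by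
      intro h
      apply hz0
      exact Complex.ext hre h
    refine ⟨-(z.im ^ 2), neg_lt_zero.2 (by positivity), ?_⟩
    rw [← hz2]
    apply Complex.ext <;>
      simp [pow_two, Complex.mul_re, Complex.mul_im, hre]
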